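/- Let P be a polynomial of exact degree n with real coefficients such that A := {x ∈ ℝ : −1 ≤ P(x) ≤ 1} satisfies 0 ∉ A, P has n simple real zeros, and |P(y)| ≥ 1 for all critical points y. Then R(x) := P(x)/P(0) is the minimal residual polynomial for degree n on A; in particular L_n(A) := min{‖Q‖_A : deg Q ≤ n, Q(0) = 1} = 1/|P(0)|. -/

import Mathlib

open Polynomial Set Filter

noncomputable def supNorm (S : Set ℝ) (P : ℝ[X]) : ℝ := sSup ((fun x => |P.eval x|) '' S)

lemma exists_root_of_mul_neg (f : ℝ → ℝ) (hf : Continuous f) {p q : ℝ} (hpq : p ≤ q)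
    (h : f p * f q < 0) : ∃ w, p < w ∧ w < q ∧ f w = 0 := by
  rcases mul_neg_iff.1 h with ⟨hp, hq⟩ | ⟨hp, hq⟩
  · obtain ⟨w, hw, hw0⟩ := intermediate_value_Icc' hpq hf.continuousOn
      (Set.mem_Icc.2 ⟨hq.le, hp.le⟩ : (0:ℝ) ∈ Set.Icc (f q) (f p))
    refine ⟨w, ?_, ?_, hw0⟩
    · rcases eq_or_lt_of_le hw.1 with rfl | h'
      · exact absurd hw0 hp.ne'
      · exact h'
    · rcases eq_or_lt_of_le hw.2 with rfl | h'
      · exact absurd hw0 hq.ne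
      · exact h'
  · obtain ⟨w, hw, hw0⟩ := intermediate_value_Icc hpq hf.continuousOn
      (Set.mem_Icc.2 ⟨hp.le, hq.le⟩ : (0:ℝ) ∈ Set.Icc (f p) (f q))
    refine ⟨w, ?_, ?_, hw0⟩
    · rcases eq_or_lt_of_le hw.1 with rfl | h'
      · exact absurd hw0 hp.ne
      · exact h'
    · rcases eq_or_lt_of_le hw.2 with rfl | h'
      · exact absurd hw0 hq.ne'
      · exact h'

lemma sign_sub_of_abs_lt {a b : ℝ} (h : |b| < |a|) : 0 < (a - b) * a := by
  rcases abs_lt.1 h with ⟨h1, h2⟩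
  rcases lt_trichotomy a 0 with ha' | rfl | ha
  · have : a - b < 0 := by nlinarith [le_abs_self b, neg_abs_le b, abs_of_neg ha']
    exact mul_pos_of_neg_of_neg this ha'
  · simp only [abs_zero] at h; exact absurd h (not_lt.2 (abs_nonneg b))
  · have : 0 < a - b := by nlinarith [le_abs_self b, neg_abs_le b, abs_of_pos ha]
    exact mul_pos this ha

set_option maxHeartbeats 3200000 in
theorem minimal_residual_of_inverse_image (n : ℕ) (hn : 1 ≤ n) (P : ℝ[X])
    (hdeg : P.natDegree = n)
    (hroots : P.roots.card = n ∧ P.roots.Nodup)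
    (hcrit : ∀ y : ℝ, P.derivative.eval y = 0 → 1 ≤ |P.eval y|)
    (h0 : (0 : ℝ) ∉ {x : ℝ | P.eval x ∈ Set.Icc (-1 : ℝ) 1}) :
    supNorm {x : ℝ | P.eval x ∈ Set.Icc (-1 : ℝ) 1} (Polynomial.C (P.eval 0)⁻¹ * P)
        = 1 / |P.eval 0| ∧
    ∀ Q : ℝ[X], Q.degree ≤ n → Q.eval 0 = 1 →
      1 / |P.eval 0| ≤ supNorm {x : ℝ | P.eval x ∈ Set.Icc (-1 : ℝ) 1} Q := by
  classical
  set A := {x : ℝ | P.eval x ∈ Set.Icc (-1 : ℝ) 1} with hA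
  set c := P.eval 0 with hcdef
  -- basic facts
  have hPcont : Continuous fun x => P.eval x := P.continuous
  have hc1 : 1 < |c| := by
    simp only [hA, Set.mem_setOf_eq, Set.mem_Icc, not_and, not_le] at h0
    rcases le_or_gt (-1 : ℝ) c with h | h
    · exact lt_abs.2 (Or.inl (h0 h))
    · exact lt_abs.2 (Or.inr (by linarith))
  have hc0 : c ≠ 0 := by intro h; rw [h] at hc1; simp at hc1; linarith
  have hP0 : P ≠ 0 := fun h => by simp [h] at hdeg; omega
  have hdegpos : 0 < P.degree := natDegree_pos_iff_degree_pos.1 (by omega)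
  -- the sorted roots
  have hFcard : P.roots.toFinset.card = n := by
    rw [Multiset.toFinset_card_of_nodup hroots.2, hroots.1]
  set F := P.roots.toFinset with hFdef
  set emb := F.orderEmbOfFin hFcard with hembdef
  have hembroot : ∀ i : Fin n, P.eval (emb i) = 0 := by
    intro i
    have h1 : (emb i) ∈ P.roots := Multiset.mem_toFinset.1 (F.orderEmbOfFin_mem hFcard i)
    exact (mem_roots'.1 h1).2
  set rr : ℕ → ℝ := fun i => if h : i < n then emb ⟨i, h⟩ else 0 with hrrdef
  have hrr : ∀ i (h : i < n), rr i = emb ⟨i, h⟩ := fun i h => dif_pos h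
  have hrmono : ∀ i j, i < j → j < n → rr i < rr j := by
    intro i j hij hj
    rw [hrr i (hij.trans hj), hrr j hj]
    exact emb.strictMono (by simpa using hij)
  have hrroot : ∀ i, i < n → P.eval (rr i) = 0 := by
    intro i h; rw [hrr i h]; exact hembroot _
  -- the product formula
  have hprod : ∀ t : ℝ, P.eval t = P.leadingCoeff * ∏ i : Fin n, (t - emb i) := by
    have key : C P.leadingCoeff * (P.roots.map fun a => X - C a).prod = P :=
      C_leadingCoeff_mul_prod_multiset_X_sub_C (by rw [hdeg]; exact hroots.1)
    have hFval : (F.val : Multiset ℝ) = P.roots := by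
      rw [hFdef, Multiset.toFinset_val, Multiset.dedup_eq_self.2 hroots.2]
    have himg : Finset.image (fun i => emb i) Finset.univ = F := by
      apply Finset.coe_injective
      rw [Finset.coe_image, Finset.coe_univ, Set.image_univ]
      exact F.range_orderEmbOfFin hFcard
    intro t
    conv_lhs => rw [← key]
    rw [eval_mul, eval_C]
    congr 1
    rw [eval_multiset_prod, Multiset.map_map,
      show ((P.roots.map (eval t ∘ fun a => X - C a))) = P.roots.map (fun a => t - a) by
        simp [Function.comp], ← hFval, ← Finset.prod_eq_multiset_prod, ← himg,
      Finset.prod_image (by intro a _ b _ h; exact emb.injective h)]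
  -- far points
  have htendB : Tendsto (fun x : ℝ => |P.eval x|) atTop atTop :=
    P.tendsto_abv_atTop (abs : ℝ → ℝ) hdegpos tendsto_abs_atTop_atTop
  have htendA : Tendsto (fun x : ℝ => |P.eval x|) atBot atTop :=
    P.tendsto_abv_atTop (abs : ℝ → ℝ) hdegpos tendsto_abs_atBot_atTop
  -- A is "bounded": images of |Q| over A are bounded above
  have hsubA : ∃ L U : ℝ, A ⊆ Set.Icc L U := by
    obtain ⟨L, hL⟩ := eventually_atBot.1 (htendA.eventually_gt_atTop 1)
    obtain ⟨U, hU⟩ := eventually_atTop.1 (htendB.eventually_gt_atTop 1)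
    refine ⟨L, U, fun x hx => ?_⟩
    simp only [hA, Set.mem_setOf_eq, Set.mem_Icc] at hx
    have habs : |P.eval x| ≤ 1 := abs_le.2 hx
    constructor
    · by_contra h; push_neg at h; linarith [hL x h.le]
    · by_contra h; push_neg at h; linarith [hU x h.le]
  have hQbdd : ∀ Q : ℝ[X], BddAbove ((fun x => |Q.eval x|) '' A) := by
    obtain ⟨L, U, hsub⟩ := hsubA
    intro Q
    have : BddAbove ((fun x => |Q.eval x|) '' Set.Icc L U) :=
      (isCompact_Icc.bddAbove_image (Q.continuous.abs.continuousOn))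
    exact this.mono (Set.image_mono hsub)
  have hAclosed : IsClosed A := IsClosed.preimage hPcont isClosed_Icc
  have habscont : Continuous fun x => |P.eval x| := hPcont.abs
  -- leftmost alternation point
  have hT0 : ∃ x, x < rr 0 ∧ |P.eval x| = 1 := by
    obtain ⟨u, hu⟩ := eventually_atBot.1 (htendA.eventually_ge_atTop 1)
    have hv1 : 1 ≤ |P.eval (min u (rr 0 - 1))| := hu _ (min_le_left _ _)
    have hvlt : min u (rr 0 - 1) < rr 0 := lt_of_le_of_lt (min_le_right _ _) (by linarith)
    obtain ⟨x, hx, hx1⟩ := intermediate_value_Icc' hvlt.le habscont.continuousOn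
      (Set.mem_Icc.2 ⟨by rw [hrroot 0 (by omega)]; simp, hv1⟩)
    replace hx1 : |P.eval x| = 1 := hx1
    refine ⟨x, ?_, hx1⟩
    rcases eq_or_lt_of_le hx.2 with h | h
    · rw [h, hrroot 0 (by omega)] at hx1; simp at hx1
    · exact h
  -- rightmost alternation point
  have hTn : ∃ x, rr (n-1) < x ∧ |P.eval x| = 1 := by
    obtain ⟨u, hu⟩ := eventually_atTop.1 (htendB.eventually_ge_atTop 1)
    have hv1 : 1 ≤ |P.eval (max u (rr (n-1) + 1))| := hu _ (le_max_left _ _)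
    have hvlt : rr (n-1) < max u (rr (n-1) + 1) := lt_of_lt_of_le (by linarith) (le_max_right _ _)
    obtain ⟨x, hx, hx1⟩ := intermediate_value_Icc hvlt.le habscont.continuousOn
      (Set.mem_Icc.2 ⟨by rw [hrroot (n-1) (by omega)]; simp, hv1⟩)
    replace hx1 : |P.eval x| = 1 := hx1
    refine ⟨x, ?_, hx1⟩
    rcases eq_or_lt_of_le hx.1 with h | h
    · rw [← h, hrroot (n-1) (by omega)] at hx1; simp at hx1
    · exact h
  -- middle alternation points
  have hTmid : ∀ i : ℕ, ∃ x, i + 1 < n → (rr i < x ∧ x < rr (i+1) ∧ |P.eval x| = 1) := by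
    intro i
    by_cases hi : i + 1 < n
    swap
    · exact ⟨0, fun h => absurd h hi⟩
    have hab : rr i < rr (i+1) := hrmono i (i+1) (by omega) hi
    obtain ⟨t0, ht0mem, ht0F⟩ := (Set.Ioo_infinite hab).exists_notMem_finset F
    have ht0 : P.eval t0 ≠ 0 := by
      intro h; exact ht0F (Multiset.mem_toFinset.2 (mem_roots'.2 ⟨hP0, h⟩))
    obtain ⟨y, hymem, hymax⟩ := isCompact_Icc.exists_isMaxOn (Set.nonempty_Icc.2 hab.le)
      habscont.continuousOn
    have hy0 : 0 < |P.eval y| := lt_of_lt_of_le (abs_pos.2 ht0)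
      (hymax (Set.mem_Icc.2 ⟨ht0mem.1.le, ht0mem.2.le⟩))
    have hyi : y ≠ rr i := by intro h; rw [h, hrroot i (by omega)] at hy0; simp at hy0
    have hyi1 : y ≠ rr (i+1) := by intro h; rw [h, hrroot (i+1) hi] at hy0; simp at hy0
    have hyIoo : y ∈ Set.Ioo (rr i) (rr (i+1)) :=
      ⟨lt_of_le_of_ne hymem.1 (Ne.symm hyi), lt_of_le_of_ne hymem.2 hyi1⟩
    have hlocal : IsLocalMax (fun x => |P.eval x|) y :=
      hymax.isLocalMax (Icc_mem_nhds hyIoo.1 hyIoo.2)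
    have hPy : P.eval y ≠ 0 := fun h => by rw [h] at hy0; simp at hy0
    have hderiv : P.derivative.eval y = 0 := by
      rcases hPy.lt_or_gt with hneg | hpos
      · have hmin : IsLocalMin (fun x => P.eval x) y := by
          filter_upwards [hlocal] with x hx
          have h1 := neg_abs_le (P.eval x)
          have h2 : |P.eval y| = -(P.eval y) := abs_of_neg hneg
          show P.eval y ≤ P.eval x
          linarith
        have := hmin.deriv_eq_zero
        rwa [Polynomial.deriv] at this
      · have hmax : IsLocalMax (fun x => P.eval x) y := by
          filter_upwards [hlocal] with x hx
          have h1 := le_abs_self (P.eval x)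
          have h2 : |P.eval y| = P.eval y := abs_of_pos hpos
          show P.eval x ≤ P.eval y
          linarith
        have := hmax.deriv_eq_zero
        rwa [Polynomial.deriv] at this
    have h1y : 1 ≤ |P.eval y| := hcrit y hderiv
    obtain ⟨x, hx, hx1⟩ := intermediate_value_Icc hyIoo.1.le habscont.continuousOn
      (Set.mem_Icc.2 ⟨by rw [hrroot i (by omega)]; simp, h1y⟩)
    replace hx1 : |P.eval x| = 1 := hx1
    refine ⟨x, fun _ => ⟨?_, lt_of_le_of_lt hx.2 hyIoo.2, hx1⟩⟩
    rcases eq_or_lt_of_le hx.1 with h | h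
    · rw [← h, hrroot i (by omega)] at hx1; simp at hx1
    · exact h
  obtain ⟨x0, hx0⟩ := hT0
  obtain ⟨xn, hxn⟩ := hTn
  choose mid hmid using hTmid
  set t : ℕ → ℝ := fun k => if k = 0 then x0 else if k < n then mid (k-1) else xn with htdef
  have ht_eq0 : t 0 = x0 := if_pos rfl
  have ht_eqn : ∀ k, n ≤ k → t k = xn := by
    intro k hk; simp only [htdef]; rw [if_neg (by omega), if_neg (by omega)]
  have ht_eqmid : ∀ k, 1 ≤ k → k < n → t k = mid (k-1) := by
    intro k h1 h2; simp only [htdef]; rw [if_neg (by omega), if_pos h2]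
  have ht_lt_r : ∀ k, k < n → t k < rr k := by
    intro k hk
    rcases Nat.eq_zero_or_pos k with rfl | hk1
    · rw [ht_eq0]; exact hx0.1
    · rw [ht_eqmid k hk1 hk]
      have h2 := (hmid (k-1) (by omega)).2.1
      rwa [show k - 1 + 1 = k by omega] at h2
  have hr_lt_t : ∀ k, k < n → rr k < t (k+1) := by
    intro k hk
    rcases lt_or_ge (k+1) n with h | h
    · rw [ht_eqmid (k+1) (by omega) h]
      exact (hmid k (by omega)).1
    · rw [ht_eqn (k+1) h]
      have hkn : k = n - 1 := by omega
      rw [hkn]; exact hxn.1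
  have ht_abs : ∀ k, k ≤ n → |P.eval (t k)| = 1 := by
    intro k hk
    rcases Nat.eq_zero_or_pos k with rfl | hk1
    · rw [ht_eq0]; exact hx0.2
    rcases lt_or_ge k n with h | h
    · rw [ht_eqmid k hk1 h]
      exact (hmid (k-1) (by omega)).2.2
    · rw [ht_eqn k h]; exact hxn.2
  -- monotonicity of t
  have htmono : ∀ k, k < n → t k < t (k+1) := fun k hk => (ht_lt_r k hk).trans (hr_lt_t k hk)
  have htmono' : ∀ j k, j ≤ k → k ≤ n → t j ≤ t k := by
    intro j k hjk hk
    induction k with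
    | zero => rw [Nat.le_zero.1 hjk]
    | succ m ih =>
      rcases Nat.lt_or_ge j (m+1) with h | h
      · exact le_trans (ih (by omega) (by omega)) (htmono m (by omega)).le
      · have hjm : j = m + 1 := by omega
        rw [hjm]
  have htA : ∀ k, k ≤ n → t k ∈ A := by
    intro k hk
    have h := ht_abs k hk
    show P.eval (t k) ∈ Set.Icc (-1:ℝ) 1
    exact Set.mem_Icc.2 (abs_le.1 h.le)
  have htne : ∀ k, k ≤ n → t k ≠ 0 := fun k hk h => h0 (h ▸ htA k hk)
  -- alternation of signs
  have halt : ∀ k, k < n → P.eval (t k) * P.eval (t (k+1)) < 0 := by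
    intro k hk
    rw [hprod (t k), hprod (t (k+1))]
    have hl : P.leadingCoeff ≠ 0 := leadingCoeff_ne_zero.2 hP0
    have hlead : 0 < P.leadingCoeff ^ 2 := by positivity
    have key : (P.leadingCoeff * ∏ i : Fin n, (t k - emb i)) *
        (P.leadingCoeff * ∏ i : Fin n, (t (k+1) - emb i))
        = P.leadingCoeff^2 * ∏ i : Fin n, ((t k - emb i) * (t (k+1) - emb i)) := by
      rw [Finset.prod_mul_distrib]; ring
    rw [key]
    apply mul_neg_of_pos_of_neg hlead
    rw [← Finset.mul_prod_erase _ _ (Finset.mem_univ (⟨k, hk⟩ : Fin n))]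
    apply mul_neg_of_neg_of_pos
    · have h1 : t k < rr k := ht_lt_r k hk
      have h2 : rr k < t (k+1) := hr_lt_t k hk
      rw [hrr k hk] at h1 h2
      exact mul_neg_of_neg_of_pos (by linarith) (by linarith)
    · apply Finset.prod_pos
      intro i hi
      have hine : i ≠ ⟨k, hk⟩ := (Finset.mem_erase.1 hi).1
      have hi2 : (i : ℕ) < n := i.2
      have e0 : rr (i : ℕ) = emb i := by rw [hrr _ hi2, Fin.eta]
      have hik : (i : ℕ) ≠ k := fun h => hine (Fin.ext h)
      rcases lt_or_gt_of_ne hik with h | h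
      · -- i < k : emb i below t k
        have e1 : rr (i:ℕ) < t ((i:ℕ)+1) := hr_lt_t (i:ℕ) hi2
        have e2 : t ((i:ℕ)+1) ≤ t k := htmono' ((i:ℕ)+1) k (by omega) (by omega)
        have e3 : t k < t (k+1) := htmono k hk
        rw [e0] at e1
        exact mul_pos (by linarith) (by linarith)
      · -- i > k : emb i above t (k+1)
        have e1 : t (k+1) < rr (i:ℕ) := by
          rcases Nat.eq_or_lt_of_le (by omega : k + 1 ≤ (i:ℕ)) with hh | hh
          · rw [← hh]; exact ht_lt_r (k+1) (by omega)
          · exact lt_trans (ht_lt_r (k+1) (by omega)) (hrmono (k+1) (i:ℕ) hh hi2)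
        have e3 : t k < t (k+1) := htmono k hk
        rw [e0] at e1
        exact mul_pos_of_neg_of_neg (by linarith) (by linarith)
  -- Part 1
  have hub : ∀ x ∈ A, |(C c⁻¹ * P).eval x| ≤ |c|⁻¹ := by
    intro x hx
    rw [eval_mul, eval_C, abs_mul, abs_inv]
    have h1 : |P.eval x| ≤ 1 := abs_le.2 (Set.mem_Icc.1 hx)
    calc |c|⁻¹ * |P.eval x| ≤ |c|⁻¹ * 1 :=
          mul_le_mul_of_nonneg_left h1 (by positivity)
      _ = |c|⁻¹ := mul_one _
  have hval : |(C c⁻¹ * P).eval (t 0)| = |c|⁻¹ := by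
    rw [eval_mul, eval_C, abs_mul, abs_inv, ht_abs 0 (by omega), mul_one]
  have part1 : supNorm A (C c⁻¹ * P) = 1 / |c| := by
    rw [_root_.supNorm, one_div]
    apply IsGreatest.csSup_eq
    constructor
    · exact ⟨t 0, htA 0 (by omega), hval⟩
    · rintro v ⟨x, hx, rfl⟩; exact hub x hx
  refine ⟨part1, ?_⟩
  -- Part 2
  intro Q hQdeg hQ0
  by_contra hcon
  push_neg at hcon
  have hQlt : ∀ x ∈ A, |Q.eval x| < 1 / |c| := by
    intro x hx
    exact lt_of_le_of_lt (le_csSup (hQbdd Q) ⟨x, hx, rfl⟩) hcon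
  set g : ℝ[X] := C c⁻¹ * P - Q with hgdef
  have hgcont : Continuous fun x => g.eval x := g.continuous
  have hgeval : ∀ x, g.eval x = c⁻¹ * P.eval x - Q.eval x := by
    intro x; rw [hgdef]; simp [eval_sub, eval_mul, eval_C]
  have hg0 : g.eval 0 = 0 := by
    rw [hgeval, hQ0, ← hcdef, inv_mul_cancel₀ hc0, sub_self]
  have hgsign : ∀ k, k ≤ n → 0 < g.eval (t k) * (c⁻¹ * P.eval (t k)) := by
    intro k hk
    rw [hgeval]
    apply sign_sub_of_abs_lt
    have h2 : |c⁻¹ * P.eval (t k)| = 1/|c| := by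
      rw [abs_mul, abs_inv, ht_abs k hk, mul_one, one_div]
    rw [h2]
    exact hQlt (t k) (htA k hk)
  have hgne : ∀ k, k ≤ n → g.eval (t k) ≠ 0 := by
    intro k hk h
    have h1 := hgsign k hk; rw [h, zero_mul] at h1; exact lt_irrefl _ h1
  have hgalt : ∀ k, k < n → g.eval (t k) * g.eval (t (k+1)) < 0 := by
    intro k hk
    have h1 := hgsign k (by omega)
    have h2 := hgsign (k+1) (by omega)
    have h3 : (c⁻¹ * P.eval (t k)) * (c⁻¹ * P.eval (t (k+1))) < 0 := by
      calc (c⁻¹ * P.eval (t k)) * (c⁻¹ * P.eval (t (k+1)))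
          = (c⁻¹ * c⁻¹) * (P.eval (t k) * P.eval (t (k+1))) := by ring
        _ < 0 := mul_neg_of_pos_of_neg (mul_self_pos.2 (inv_ne_zero hc0)) (halt k hk)
    nlinarith [mul_pos h1 h2]
  have hzex : ∀ k, ∃ z, k < n → (t k < z ∧ z < t (k+1) ∧ g.eval z = 0) := by
    intro k
    by_cases hk : k < n
    · obtain ⟨w, h1, h2, h3⟩ := exists_root_of_mul_neg (fun x => g.eval x) hgcont
        (htmono k hk).le (hgalt k hk)
      exact ⟨w, fun _ => ⟨h1, h2, h3⟩⟩
    · exact ⟨0, fun h => absurd h hk⟩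
  choose z hz using hzex
  -- the final contradiction: n+1 distinct roots of g
  have hgne0 : g ≠ 0 := fun h => hgne 0 (by omega) (by rw [h]; simp)
  have hgdeg : g.natDegree ≤ n := by
    apply natDegree_le_iff_degree_le.2
    rw [hgdef]
    refine le_trans (degree_sub_le _ _) (max_le ?_ hQdeg)
    refine le_trans (degree_mul_le _ _) ?_
    rw [degree_eq_natDegree hP0, hdeg]
    calc (C c⁻¹).degree + (n : WithBot ℕ) ≤ 0 + (n : WithBot ℕ) :=
          add_le_add degree_C_le le_rfl
      _ = (n : WithBot ℕ) := zero_add _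
  have hfinal : ∀ zz : ℕ → ℝ,
      (∀ k, k < n → t k < zz k ∧ zz k < t (k+1) ∧ g.eval (zz k) = 0 ∧ zz k ≠ 0) → False := by
    intro zz hzz
    have hmono : ∀ j k, j < k → k < n → zz j < zz k := by
      intro j k hjk hk
      have h1 := (hzz j (by omega)).2.1
      have h2 := (hzz k hk).1
      have h3 : t (j+1) ≤ t k := htmono' (j+1) k (by omega) (by omega)
      linarith
    have hginj : Set.InjOn (fun k => zz k) ↑(Finset.range n) := by
      intro p hp q hq hpq
      simp only [Finset.coe_range, Set.mem_Iio] at hp hq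
      rcases lt_trichotomy p q with h|h|h
      · exact absurd hpq (ne_of_lt (hmono p q h hq))
      · exact h
      · exact absurd hpq.symm (ne_of_lt (hmono q p h hp))
    have h0Z : (0:ℝ) ∉ (Finset.range n).image (fun k => zz k) := by
      simp only [Finset.mem_image, Finset.mem_range, not_exists, not_and]
      intro k hk
      exact (hzz k hk).2.2.2
    have hcard : ((insert (0:ℝ) ((Finset.range n).image (fun k => zz k))) : Finset ℝ).card = n + 1 := by
      rw [Finset.card_insert_of_notMem h0Z, Finset.card_image_of_injOn hginj, Finset.card_range]
    have hroots2 : ∀ x ∈ (insert (0:ℝ) ((Finset.range n).image (fun k => zz k))), g.eval x = 0 := by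
      intro x hx
      rcases Finset.mem_insert.1 hx with rfl | hx
      · exact hg0
      · obtain ⟨k, hk, rfl⟩ := Finset.mem_image.1 hx
        exact (hzz k (Finset.mem_range.1 hk)).2.2.1
    exact hgne0 (eq_zero_of_natDegree_lt_card_of_eval_eq_zero' g _ hroots2 (by omega))
  -- locate 0 relative to the alternation points
  rcases lt_or_gt_of_ne (htne 0 (by omega)) with ht0neg | ht0pos
  · rcases lt_or_gt_of_ne (htne n (le_refl n)) with htnneg | htnpos
    · -- all of the t's are negative
      apply hfinal z
      intro k hk
      obtain ⟨e1, e2, e3⟩ := hz k hk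
      have e4 : t (k+1) ≤ t n := htmono' (k+1) n (by omega) (le_refl n)
      exact ⟨e1, e2, e3, by intro h; rw [h] at e2; linarith⟩
    · -- t 0 < 0 < t n : the gap case
      have hex : ∀ k, k ≤ n → 0 < t k → ∃ m, 1 ≤ m ∧ m ≤ k ∧ t (m-1) < 0 ∧ 0 < t m := by
        intro k
        induction k with
        | zero => intro _ h; linarith
        | succ p ih =>
          intro hk h
          rcases lt_or_gt_of_ne (htne p (by omega)) with hneg | hpos
          · refine ⟨p+1, by omega, le_refl _, ?_, h⟩
            rw [Nat.add_sub_cancel]; exact hneg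
          · obtain ⟨m', h1, h2, h3, h4⟩ := ih (by omega) hpos
            exact ⟨m', h1, by omega, h3, h4⟩
      obtain ⟨m, hmpos, hmle, hm0, hm1⟩ := hex n (le_refl n) htnpos
      -- gap endpoints a and b
      have hbddS : BddAbove (A ∩ Set.Iic 0) := ⟨0, fun x hx => hx.2⟩
      have hbddI : BddBelow (A ∩ Set.Ici 0) := ⟨0, fun x hx => hx.2⟩
      have hAIic : (A ∩ Set.Iic 0).Nonempty := ⟨t (m-1), htA (m-1) (by omega), hm0.le⟩
      have haSup : sSup (A ∩ Set.Iic 0) ∈ A ∩ Set.Iic 0 :=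
        (hAclosed.inter isClosed_Iic).csSup_mem hAIic hbddS
      set a := sSup (A ∩ Set.Iic 0) with ha
      have haA : a ∈ A := haSup.1
      have haneg : a < 0 := lt_of_le_of_ne haSup.2 (fun h => h0 (h ▸ haA))
      have htm1a : t (m-1) ≤ a := le_csSup hbddS ⟨htA (m-1) (by omega), hm0.le⟩
      have hAIci : (A ∩ Set.Ici 0).Nonempty := ⟨t m, htA m hmle, hm1.le⟩
      have hbInf : sInf (A ∩ Set.Ici 0) ∈ A ∩ Set.Ici 0 :=
        (hAclosed.inter isClosed_Ici).csInf_mem hAIci hbddI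
      set b := sInf (A ∩ Set.Ici 0) with hb
      have hbA : b ∈ A := hbInf.1
      have hbpos : 0 < b := lt_of_le_of_ne hbInf.2 (fun h => h0 (h.symm ▸ hbA))
      have hbtm : b ≤ t m := csInf_le hbddI ⟨htA m hmle, hm1.le⟩
      have hab : a < b := haneg.trans hbpos
      have hgap1 : ∀ x, a < x → x < b → 1 < |P.eval x| := by
        intro x h1 h2
        have hxA : x ∉ A := by
          intro hxA
          rcases le_or_gt x 0 with h | h
          · exact absurd (le_csSup hbddS ⟨hxA, h⟩) (not_le.2 h1)
          · exact absurd (csInf_le hbddI ⟨hxA, h.le⟩) (not_le.2 h2)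
        simp only [hA, Set.mem_setOf_eq, Set.mem_Icc, not_and, not_le] at hxA
        rcases le_or_gt (-1:ℝ) (P.eval x) with h | h
        · exact lt_abs.2 (Or.inl (hxA h))
        · exact lt_abs.2 (Or.inr (by linarith))
      have hPa1 : 1 ≤ |P.eval a| := by
        have hcl : a ∈ closure (Set.Ioo a b) := by
          rw [closure_Ioo hab.ne]; exact ⟨le_refl a, hab.le⟩
        have hnb : (nhdsWithin a (Set.Ioo a b)).NeBot := mem_closure_iff_nhdsWithin_neBot.1 hcl
        have htd : Filter.Tendsto (fun x => |P.eval x|) (nhdsWithin a (Set.Ioo a b))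
            (nhds (|P.eval a|)) := habscont.continuousWithinAt
        refine ge_of_tendsto htd ?_
        filter_upwards [self_mem_nhdsWithin] with x hx
        exact (hgap1 x hx.1 hx.2).le
      have hPb1 : 1 ≤ |P.eval b| := by
        have hcl : b ∈ closure (Set.Ioo a b) := by
          rw [closure_Ioo hab.ne]; exact ⟨hab.le, le_refl b⟩
        have hnb : (nhdsWithin b (Set.Ioo a b)).NeBot := mem_closure_iff_nhdsWithin_neBot.1 hcl
        have htd : Filter.Tendsto (fun x => |P.eval x|) (nhdsWithin b (Set.Ioo a b))
            (nhds (|P.eval b|)) := habscont.continuousWithinAt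
        refine ge_of_tendsto htd ?_
        filter_upwards [self_mem_nhdsWithin] with x hx
        exact (hgap1 x hx.1 hx.2).le
      have hPane : P.eval a ≠ 0 := fun h => by rw [h] at hPa1; norm_num at hPa1
      have hPbne : P.eval b ≠ 0 := fun h => by rw [h] at hPb1; norm_num at hPb1
      have hPab : 0 < P.eval a * P.eval b := by
        rcases lt_trichotomy (P.eval a * P.eval b) 0 with h | h | h
        · obtain ⟨w, hw1, hw2, hw3⟩ := exists_root_of_mul_neg (fun x => P.eval x) hPcont hab.le h
          have h4 := hgap1 w hw1 hw2
          rw [show P.eval w = 0 from hw3] at h4; norm_num at h4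
        · rcases mul_eq_zero.1 h with h | h
          exacts [absurd h hPane, absurd h hPbne]
        · exact h
      have hga : 0 < g.eval a * (c⁻¹ * P.eval a) := by
        rw [hgeval]
        apply sign_sub_of_abs_lt
        have h1 : |Q.eval a| < 1/|c| := hQlt a haA
        have h2 : 1/|c| ≤ |c⁻¹ * P.eval a| := by
          rw [abs_mul, abs_inv, one_div]
          exact le_mul_of_one_le_right (by positivity) hPa1
        linarith
      have hgb : 0 < g.eval b * (c⁻¹ * P.eval b) := by
        rw [hgeval]
        apply sign_sub_of_abs_lt
        have h1 : |Q.eval b| < 1/|c| := hQlt b hbA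
        have h2 : 1/|c| ≤ |c⁻¹ * P.eval b| := by
          rw [abs_mul, abs_inv, one_div]
          exact le_mul_of_one_le_right (by positivity) hPb1
        linarith
      have hgagb : 0 < g.eval a * g.eval b := by
        have hcc : 0 < (c⁻¹ * P.eval a) * (c⁻¹ * P.eval b) := by
          have : (c⁻¹ * P.eval a) * (c⁻¹ * P.eval b)
              = (c⁻¹ * c⁻¹) * (P.eval a * P.eval b) := by ring
          rw [this]
          exact mul_pos (mul_self_pos.2 (inv_ne_zero hc0)) hPab
        nlinarith [mul_pos hga hgb]
      have hs12 : g.eval (t (m-1)) * g.eval (t m) < 0 := by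
        have h := hgalt (m-1) (by omega)
        rwa [show m - 1 + 1 = m by omega] at h
      have hg1a : g.eval (t (m-1)) * g.eval a ≠ 0 ∧ True := by
        constructor
        · intro h
          rcases mul_eq_zero.1 h with h | h
          · exact hgne (m-1) (by omega) h
          · rw [h, zero_mul] at hga; exact lt_irrefl _ hga
        · trivial
      have hwex : ∃ w, t (m-1) < w ∧ w < t m ∧ g.eval w = 0 ∧ w ≠ 0 := by
        rcases lt_or_gt_of_ne hg1a.1 with hneg | hpos
        · obtain ⟨w, hw1, hw2, hw3⟩ := exists_root_of_mul_neg (fun x => g.eval x) hgcont htm1a hneg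
          exact ⟨w, hw1, by linarith, hw3, by intro h; rw [h] at hw2; linarith⟩
        · have hbg2 : g.eval b * g.eval (t m) < 0 := by
            rcases mul_pos_iff.1 hpos with ⟨p1, p2⟩ | ⟨p1, p2⟩ <;>
              rcases mul_pos_iff.1 hgagb with ⟨q1, q2⟩ | ⟨q1, q2⟩ <;>
                rcases mul_neg_iff.1 hs12 with ⟨r1, r2⟩ | ⟨r1, r2⟩ <;>
                  first
                    | linarith
                    | exact mul_neg_of_pos_of_neg (by linarith) (by linarith)
                    | exact mul_neg_of_neg_of_pos (by linarith) (by linarith)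
          obtain ⟨w, hw1, hw2, hw3⟩ := exists_root_of_mul_neg (fun x => g.eval x) hgcont hbtm hbg2
          exact ⟨w, by linarith, hw2, hw3, by intro h; rw [h] at hw1; linarith⟩
      obtain ⟨w, hw1, hw2, hw3, hw4⟩ := hwex
      apply hfinal (fun k => if k = m - 1 then w else z k)
      intro k hk
      by_cases hkm : k = m - 1
      · simp only [if_pos hkm]
        refine ⟨?_, ?_, hw3, hw4⟩
        · rw [hkm]; exact hw1
        · rw [show k + 1 = m by omega]; exact hw2
      · simp only [if_neg hkm]
        obtain ⟨e1, e2, e3⟩ := hz k hk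
        refine ⟨e1, e2, e3, ?_⟩
        rcases Nat.lt_or_ge k (m-1) with h | h
        · have e4 : t (k+1) ≤ t (m-1) := htmono' (k+1) (m-1) (by omega) (by omega)
          intro hzk; rw [hzk] at e2; linarith
        · have hk' : m ≤ k := by omega
          have e4 : t m ≤ t k := htmono' m k hk' (by omega)
          intro hzk; rw [hzk] at e1; linarith
  · -- all of the t's are positive
    apply hfinal z
    intro k hk
    obtain ⟨e1, e2, e3⟩ := hz k hk
    have e4 : t 0 ≤ t k := htmono' 0 k (by omega) (by omega)
    exact ⟨e1, e2, e3, by intro h; rw [h] at e1; linarith⟩
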